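/- Every solution of the unilateral (one-sided) spring oscillator m·u''(t) + k·u(t) + k_r·max(u(t),0) = 0, with m > 0, k > 0, k_r > 0, that is not identically zero is periodic, and its minimal period is T = π·√(m/k) + π·√(m/(k+k_r)); in particular the period is independent of the amplitude of the solution. -/

import Mathlib

open Real
open Set

/-- The oscillator vector field. -/
noncomputable def oscF (m k kr : ℝ) : ℝ × ℝ → ℝ × ℝ :=
  fun p => (p.2, -(k * p.1 + kr * max p.1 0) / m)

lemma osc_lip (m k kr : ℝ) (hm : 0 < m) (hk : 0 < k) (hkr : 0 < kr) :
    ∃ K : NNReal, LipschitzWith K (oscF m k kr) := by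
  set C : NNReal := ⟨(k + kr) / m, by positivity⟩ with hC
  have hg : LipschitzWith C (fun x : ℝ => -(k * x + kr * max x 0) / m) := by
    rw [lipschitzWith_iff_dist_le_mul]
    intro x y
    have hmax : |max x 0 - max y 0| ≤ |x - y| := abs_max_sub_max_le_abs x y 0
    rw [Real.dist_eq, Real.dist_eq]
    have hCc : (C : ℝ) = (k + kr) / m := rfl
    rw [hCc]
    have h1 : -(k * x + kr * max x 0) / m - -(k * y + kr * max y 0) / m
        = (k * (y - x) + kr * (max y 0 - max x 0)) / m := by
      field_simp; ring
    rw [h1, abs_div, abs_of_pos hm, div_mul_eq_mul_div]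
    gcongr
    calc |k * (y - x) + kr * (max y 0 - max x 0)|
        ≤ |k * (y - x)| + |kr * (max y 0 - max x 0)| := abs_add_le _ _
      _ = k * |y - x| + kr * |max y 0 - max x 0| := by
          rw [abs_mul, abs_mul, abs_of_pos hk, abs_of_pos hkr]
      _ ≤ k * |x - y| + kr * |x - y| := by
          rw [abs_sub_comm y x]
          have : |max y 0 - max x 0| ≤ |x - y| := by rwa [abs_sub_comm]
          nlinarith
      _ = (k + kr) * |x - y| := by ring
  refine ⟨max 1 (C * 1), ?_⟩
  exact LipschitzWith.prod_snd.prodMk (hg.comp LipschitzWith.prod_fst)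

lemma osc_uniq {m k kr : ℝ} {K : NNReal} (hF : LipschitzWith K (oscF m k kr))
    {f g : ℝ → ℝ × ℝ} (hf : ∀ t, HasDerivAt f (oscF m k kr (f t)) t)
    (hg : ∀ t, HasDerivAt g (oscF m k kr (g t)) t)
    {t₀ : ℝ} (h0 : f t₀ = g t₀) : ∀ t, f t = g t := by
  intro t
  have ht₀ : t₀ ∈ Ioo (min t t₀ - 1) (max t t₀ + 1) :=
    ⟨by have := min_le_right t t₀; linarith, by have := le_max_right t t₀; linarith⟩
  have ht : t ∈ Icc (min t t₀ - 1) (max t t₀ + 1) :=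
    ⟨by have := min_le_left t t₀; linarith, by have := le_max_left t t₀; linarith⟩
  exact ODE_solution_unique_of_mem_Icc (v := fun _ => oscF m k kr) (s := fun _ => univ)
    (fun _ _ => hF.lipschitzOnWith) ht₀
    (fun x _ => (hf x).continuousAt.continuousWithinAt)
    (fun x _ => hf x) (fun _ _ => trivial)
    (fun x _ => (hg x).continuousAt.continuousWithinAt)
    (fun x _ => hg x) (fun _ _ => trivial) h0 ht



/-- the explicit sinusoid arc -/
noncomputable def oscW (ω A B t₁ : ℝ) : ℝ → ℝ :=
  fun t => A * Real.cos (ω * (t - t₁)) + (B / ω) * Real.sin (ω * (t - t₁))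

noncomputable def oscW' (ω A B t₁ : ℝ) : ℝ → ℝ :=
  fun t => -(A * ω) * Real.sin (ω * (t - t₁)) + B * Real.cos (ω * (t - t₁))

lemma oscW_hasDeriv (ω A B t₁ : ℝ) (hω : ω ≠ 0) (t : ℝ) :
    HasDerivAt (oscW ω A B t₁) (oscW' ω A B t₁ t) t ∧
    HasDerivAt (oscW' ω A B t₁) (-(ω ^ 2) * oscW ω A B t₁ t) t := by
  have hh : HasDerivAt (fun s : ℝ => ω * (s - t₁)) ω t := by
    simpa using ((hasDerivAt_id t).sub_const t₁).const_mul ω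
  have hcos : HasDerivAt (fun s : ℝ => Real.cos (ω * (s - t₁)))
      (-Real.sin (ω * (t - t₁)) * ω) t := (Real.hasDerivAt_cos _).comp t hh
  have hsin : HasDerivAt (fun s : ℝ => Real.sin (ω * (s - t₁)))
      (Real.cos (ω * (t - t₁)) * ω) t := (Real.hasDerivAt_sin _).comp t hh
  constructor
  · have := (hcos.const_mul A).add (hsin.const_mul (B / ω))
    refine this.congr_deriv ?_
    unfold oscW'
    field_simp
  · have := (hsin.const_mul (-(A * ω))).add (hcos.const_mul B)
    refine this.congr_deriv ?_
    unfold oscW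
    field_simp
    ring

/-- Single-arc comparison: on an interval where the sinusoid satisfies the nonlinear field
identity, the solution coincides with it. -/
lemma osc_arc (m k kr ω A B t₁ L : ℝ) (hm : 0 < m) (hω : 0 < ω) (hL : 0 ≤ L)
    {K : NNReal} (hF : LipschitzWith K (oscF m k kr))
    (u : ℝ → ℝ) (hu : Differentiable ℝ u) (hu' : Differentiable ℝ (deriv u))
    (hode : ∀ t : ℝ, m * deriv (deriv u) t + k * u t + kr * max (u t) 0 = 0)
    (hA : u t₁ = A) (hB : deriv u t₁ = B)
    (hfield : ∀ t ∈ Icc t₁ (t₁ + L),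
      k * oscW ω A B t₁ t + kr * max (oscW ω A B t₁ t) 0 = m * ω ^ 2 * oscW ω A B t₁ t) :
    ∀ t ∈ Icc t₁ (t₁ + L), u t = oscW ω A B t₁ t ∧ deriv u t = oscW' ω A B t₁ t := by
  set f : ℝ → ℝ × ℝ := fun t => (u t, deriv u t) with hf
  set g : ℝ → ℝ × ℝ := fun t => (oscW ω A B t₁ t, oscW' ω A B t₁ t) with hg
  have hfd : ∀ t, HasDerivAt f (oscF m k kr (f t)) t := by
    intro t
    have h1 : HasDerivAt u (deriv u t) t := (hu t).hasDerivAt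
    have h2 : HasDerivAt (deriv u) (deriv (deriv u) t) t := (hu' t).hasDerivAt
    have heq : deriv (deriv u) t = -(k * u t + kr * max (u t) 0) / m := by
      have := hode t
      field_simp
      linarith
    have := h1.prodMk h2
    rw [heq] at this
    exact this
  have hgd : ∀ t ∈ Icc t₁ (t₁ + L), HasDerivAt g (oscF m k kr (g t)) t := by
    intro t ht
    obtain ⟨hw1, hw2⟩ := oscW_hasDeriv ω A B t₁ (ne_of_gt hω) t
    have h2 : -(k * oscW ω A B t₁ t + kr * max (oscW ω A B t₁ t) 0) / m
        = -(ω ^ 2) * oscW ω A B t₁ t := by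
      rw [hfield t ht]
      field_simp
    have := hw1.prodMk hw2
    show HasDerivAt g (oscW' ω A B t₁ t, -(k * oscW ω A B t₁ t + kr * max (oscW ω A B t₁ t) 0) / m) t
    rw [h2]
    exact this
  have h0 : f t₁ = g t₁ := by
    simp only [hf, hg, oscW, oscW', sub_self, mul_zero, Real.cos_zero, Real.sin_zero]
    rw [hA, hB]
    norm_num
  have key : EqOn f g (Icc t₁ (t₁ + L)) := by
    apply ODE_solution_unique (v := fun _ => oscF m k kr) (fun _ => hF)
      (fun x _ => (hfd x).continuousAt.continuousWithinAt)
      (fun x hx => (hfd x).hasDerivWithinAt)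
      (fun x hx => ((hgd x hx).continuousAt.continuousWithinAt))
      (fun x hx => (hgd x (Ico_subset_Icc_self hx)).hasDerivWithinAt)
      h0
  · intro t ht
    have := key ht
    exact ⟨congrArg Prod.fst this, congrArg Prod.snd this⟩



/-- First zero of a nontrivial sinusoid, with sign control before it and
nonvanishing derivative at it. -/
lemma osc_first_zero (ω A B t₁ : ℝ) (hω : 0 < ω) (hA : A ≠ 0) :
    ∃ t₂ ∈ Icc t₁ (t₁ + Real.pi / ω), oscW ω A B t₁ t₂ = 0 ∧
      (∀ t ∈ Icc t₁ t₂, 0 < A → 0 ≤ oscW ω A B t₁ t) ∧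
      (∀ t ∈ Icc t₁ t₂, A < 0 → oscW ω A B t₁ t ≤ 0) ∧ oscW' ω A B t₁ t₂ ≠ 0 := by
  have hπ : 0 < Real.pi / ω := div_pos Real.pi_pos hω
  have hle : t₁ ≤ t₁ + Real.pi / ω := by linarith
  have hcont : Continuous (oscW ω A B t₁) := by unfold oscW; fun_prop
  have hstart : oscW ω A B t₁ t₁ = A := by simp [oscW]
  have hend : oscW ω A B t₁ (t₁ + Real.pi / ω) = -A := by
    have h : ω * (t₁ + Real.pi / ω - t₁) = Real.pi := by
      rw [add_sub_cancel_left, mul_div_cancel₀ _ (ne_of_gt hω)]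
    unfold oscW; rw [h]; simp
  -- the zero set
  set S : Set ℝ := Icc t₁ (t₁ + Real.pi / ω) ∩ (oscW ω A B t₁) ⁻¹' {0} with hS
  have hSne : S.Nonempty := by
    rcases hA.lt_or_gt with h | h
    · have : (0 : ℝ) ∈ Icc (oscW ω A B t₁ t₁) (oscW ω A B t₁ (t₁ + Real.pi / ω)) := by
        rw [hstart, hend]; constructor <;> linarith
      obtain ⟨z, hz, hz0⟩ := intermediate_value_Icc hle hcont.continuousOn this
      exact ⟨z, hz, hz0⟩
    · have : (0 : ℝ) ∈ Icc (oscW ω A B t₁ (t₁ + Real.pi / ω)) (oscW ω A B t₁ t₁) := by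
        rw [hstart, hend]; constructor <;> linarith
      obtain ⟨z, hz, hz0⟩ := intermediate_value_Icc' hle hcont.continuousOn this
      exact ⟨z, hz, hz0⟩
  have hSc : IsClosed S := isClosed_Icc.inter (isClosed_singleton.preimage hcont)
  have hSb : BddBelow S := ⟨t₁, fun x hx => hx.1.1⟩
  set t₂ := sInf S with ht₂
  have hmem : t₂ ∈ S := hSc.csInf_mem hSne hSb
  have hzero : oscW ω A B t₁ t₂ = 0 := hmem.2
  have hIcc : t₂ ∈ Icc t₁ (t₁ + Real.pi / ω) := hmem.1
  -- sign control before t₂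
  have hsignpos : ∀ t ∈ Icc t₁ t₂, 0 < A → 0 ≤ oscW ω A B t₁ t := by
    intro t ht hApos
    by_contra hneg
    push_neg at hneg
    have htlt : t < t₂ := lt_of_le_of_ne ht.2 (by rintro rfl; rw [hzero] at hneg; linarith)
    have h0mem : (0 : ℝ) ∈ Icc (oscW ω A B t₁ t) (oscW ω A B t₁ t₁) := by
      rw [hstart]; constructor <;> linarith
    obtain ⟨s, hs, hs0⟩ := intermediate_value_Icc' ht.1 hcont.continuousOn h0mem
    have hsS : s ∈ S := ⟨⟨hs.1, le_trans hs.2 (le_trans (le_of_lt htlt) hIcc.2)⟩, hs0⟩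
    have := csInf_le hSb hsS
    have : t₂ ≤ t := le_trans this hs.2
    linarith
  have hsignneg : ∀ t ∈ Icc t₁ t₂, A < 0 → oscW ω A B t₁ t ≤ 0 := by
    intro t ht hAneg
    by_contra hneg
    push_neg at hneg
    have htlt : t < t₂ := lt_of_le_of_ne ht.2 (by rintro rfl; rw [hzero] at hneg; linarith)
    have h0mem : (0 : ℝ) ∈ Icc (oscW ω A B t₁ t₁) (oscW ω A B t₁ t) := by
      rw [hstart]; constructor <;> linarith
    obtain ⟨s, hs, hs0⟩ := intermediate_value_Icc ht.1 hcont.continuousOn h0mem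
    have hsS : s ∈ S := ⟨⟨hs.1, le_trans hs.2 (le_trans (le_of_lt htlt) hIcc.2)⟩, hs0⟩
    have := csInf_le hSb hsS
    have : t₂ ≤ t := le_trans this hs.2
    linarith
  -- nonvanishing derivative
  have hder : oscW' ω A B t₁ t₂ ≠ 0 := by
    intro h0
    set θ := ω * (t₂ - t₁) with hθ
    have e1 : A * Real.cos θ + (B / ω) * Real.sin θ = 0 := hzero
    have e2 : -(A * ω) * Real.sin θ + B * Real.cos θ = 0 := h0
    have pyth : Real.sin θ ^ 2 + Real.cos θ ^ 2 = 1 := Real.sin_sq_add_cos_sq θ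
    have hωne : ω ≠ 0 := ne_of_gt hω
    set b := B / ω with hb
    have hB : B = b * ω := (div_mul_cancel₀ B hωne).symm
    rw [hB] at e2
    have hA0 : ω * A = 0 := by
      linear_combination ω * Real.cos θ * e1 - Real.sin θ * e2 - ω * A * pyth
    exact hA ((mul_eq_zero.mp hA0).resolve_left hωne)
  exact ⟨t₂, hIcc, hzero, hsignpos, hsignneg, hder⟩


/-- Every nonzero solution has a zero with positive derivative. -/
lemma osc_zero (m k kr ω1 ω2 : ℝ) (hm : 0 < m) (hk : 0 < k) (hkr : 0 < kr)
    (hω1 : 0 < ω1) (hω2 : 0 < ω2) (hm1 : m * ω1 ^ 2 = k) (hm2 : m * ω2 ^ 2 = k + kr)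
    {K : NNReal} (hF : LipschitzWith K (oscF m k kr))
    (u : ℝ → ℝ) (hu : Differentiable ℝ u) (hu' : Differentiable ℝ (deriv u))
    (hode : ∀ t : ℝ, m * deriv (deriv u) t + k * u t + kr * max (u t) 0 = 0)
    (hne : u ≠ 0) :
    ∃ t₀ c : ℝ, 0 < c ∧ u t₀ = 0 ∧ deriv u t₀ = c := by
  obtain ⟨t₁, ht₁⟩ : ∃ t, u t ≠ 0 := by
    by_contra h; push_neg at h; exact hne (funext h)
  -- Step 1: find a zero with nonzero derivative
  have step1 : ∃ t₂, u t₂ = 0 ∧ deriv u t₂ ≠ 0 := by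
    rcases ht₁.lt_or_gt with hneg | hpos
    · -- u t₁ < 0 : use the free frequency ω1
      obtain ⟨t₂, hIcc, hzero, _, hsgn, hder⟩ :=
        osc_first_zero ω1 (u t₁) (deriv u t₁) t₁ hω1 (ne_of_lt hneg)
      have hL : 0 ≤ t₂ - t₁ := by linarith [hIcc.1]
      have harc := osc_arc m k kr ω1 (u t₁) (deriv u t₁) t₁ (t₂ - t₁) hm hω1 hL hF
        u hu hu' hode rfl rfl ?_
      · have hmem : t₂ ∈ Icc t₁ (t₁ + (t₂ - t₁)) := by
          constructor <;> [linarith [hIcc.1]; linarith]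
        obtain ⟨he1, he2⟩ := harc t₂ hmem
        exact ⟨t₂, by rw [he1]; exact hzero, by rw [he2]; exact hder⟩
      · intro t ht
        have ht' : t ∈ Icc t₁ t₂ := by
          constructor
          · exact ht.1
          · linarith [ht.2]
        have hw : oscW ω1 (u t₁) (deriv u t₁) t₁ t ≤ 0 := hsgn t ht' hneg
        rw [max_eq_right hw]
        rw [← hm1]; ring
    · -- u t₁ > 0 : use the contact frequency ω2
      obtain ⟨t₂, hIcc, hzero, hsgn, _, hder⟩ :=
        osc_first_zero ω2 (u t₁) (deriv u t₁) t₁ hω2 (ne_of_gt hpos)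
      have hL : 0 ≤ t₂ - t₁ := by linarith [hIcc.1]
      have harc := osc_arc m k kr ω2 (u t₁) (deriv u t₁) t₁ (t₂ - t₁) hm hω2 hL hF
        u hu hu' hode rfl rfl ?_
      · have hmem : t₂ ∈ Icc t₁ (t₁ + (t₂ - t₁)) := by
          constructor <;> [linarith [hIcc.1]; linarith]
        obtain ⟨he1, he2⟩ := harc t₂ hmem
        exact ⟨t₂, by rw [he1]; exact hzero, by rw [he2]; exact hder⟩
      · intro t ht
        have ht' : t ∈ Icc t₁ t₂ := by
          constructor
          · exact ht.1
          · linarith [ht.2]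
        have hw : 0 ≤ oscW ω2 (u t₁) (deriv u t₁) t₁ t := hsgn t ht' hpos
        rw [max_eq_left hw, hm2]; ring
  obtain ⟨t₂, hu0, hd⟩ := step1
  rcases hd.lt_or_gt with hdn | hdp
  · -- negative derivative: run a free half-arc to flip the sign
    set c' := deriv u t₂ with hc'
    have hπ : (0:ℝ) ≤ Real.pi / ω1 := le_of_lt (div_pos Real.pi_pos hω1)
    have harc := osc_arc m k kr ω1 0 c' t₂ (Real.pi / ω1) hm hω1 hπ hF
      u hu hu' hode hu0 rfl ?_
    · have hmem : t₂ + Real.pi / ω1 ∈ Icc t₂ (t₂ + Real.pi / ω1) := by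
        constructor <;> linarith
      obtain ⟨he1, he2⟩ := harc _ hmem
      have hωπ : ω1 * (t₂ + Real.pi / ω1 - t₂) = Real.pi := by
        rw [add_sub_cancel_left, mul_div_cancel₀ _ (ne_of_gt hω1)]
      refine ⟨t₂ + Real.pi / ω1, -c', by linarith, ?_, ?_⟩
      · rw [he1]; unfold oscW; rw [hωπ]; simp
      · rw [he2]; unfold oscW'; rw [hωπ]; simp
    · intro t ht
      have h1 : 0 ≤ ω1 * (t - t₂) := by
        have := ht.1; nlinarith
      have h2 : ω1 * (t - t₂) ≤ Real.pi := by
        have h3 : t - t₂ ≤ Real.pi / ω1 := by linarith [ht.2]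
        calc ω1 * (t - t₂) ≤ ω1 * (Real.pi / ω1) := by nlinarith
          _ = Real.pi := mul_div_cancel₀ _ (ne_of_gt hω1)
      have hsin : 0 ≤ Real.sin (ω1 * (t - t₂)) := Real.sin_nonneg_of_nonneg_of_le_pi h1 h2
      have hw : oscW ω1 0 c' t₂ t ≤ 0 := by
        unfold oscW
        have : c' / ω1 ≤ 0 := div_nonpos_of_nonpos_of_nonneg (le_of_lt hdn) (le_of_lt hω1)
        nlinarith
      rw [max_eq_right hw]
      rw [← hm1]; ring
  · exact ⟨t₂, deriv u t₂, hdp, hu0, rfl⟩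

/-- The pair `(u, u')` solves the first-order system. -/
lemma osc_sol (m k kr : ℝ) (hm : 0 < m)
    (u : ℝ → ℝ) (hu : Differentiable ℝ u) (hu' : Differentiable ℝ (deriv u))
    (hode : ∀ t : ℝ, m * deriv (deriv u) t + k * u t + kr * max (u t) 0 = 0) :
    ∀ t, HasDerivAt (fun s => (u s, deriv u s)) (oscF m k kr (u t, deriv u t)) t := by
  intro t
  have h1 : HasDerivAt u (deriv u t) t := (hu t).hasDerivAt
  have h2 : HasDerivAt (deriv u) (deriv (deriv u) t) t := (hu' t).hasDerivAt
  have heq : deriv (deriv u) t = -(k * u t + kr * max (u t) 0) / m := by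
    have := hode t
    field_simp
    linarith
  have := h1.prodMk h2
  rw [heq] at this
  exact this

set_option maxHeartbeats 800000 in
/-- Every nonzero solution of the unilateral spring oscillator
`m·u'' + k·u + k_r·max(u,0) = 0` (with `m, k, k_r > 0`) is periodic with minimal period
`T = π·√(m/k) + π·√(m/(k+k_r))`; the period does not depend on the amplitude of the
solution (the claimed period `T` depends only on `m`, `k`, `k_r`). -/
theorem unilateral_oscillator_periodic_minimal_period
    (m k kr : ℝ) (hm : 0 < m) (hk : 0 < k) (hkr : 0 < kr)
    (u : ℝ → ℝ) (hu : Differentiable ℝ u) (hu' : Differentiable ℝ (deriv u))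
    (hode : ∀ t : ℝ, m * deriv (deriv u) t + k * u t + kr * max (u t) 0 = 0)
    (hne : u ≠ 0) :
    Function.Periodic u (π * Real.sqrt (m / k) + π * Real.sqrt (m / (k + kr))) ∧
      ∀ T' : ℝ, 0 < T' → Function.Periodic u T' →
        π * Real.sqrt (m / k) + π * Real.sqrt (m / (k + kr)) ≤ T' := by
  have hkkr : (0:ℝ) < k + kr := by linarith
  set ω1 := Real.sqrt (k / m) with hω1def
  set ω2 := Real.sqrt ((k + kr) / m) with hω2def
  have hω1 : 0 < ω1 := Real.sqrt_pos.2 (div_pos hk hm)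
  have hω2 : 0 < ω2 := Real.sqrt_pos.2 (div_pos hkkr hm)
  have hm1 : m * ω1 ^ 2 = k := by
    rw [hω1def, Real.sq_sqrt (div_pos hk hm).le]; field_simp
  have hm2 : m * ω2 ^ 2 = k + kr := by
    rw [hω2def, Real.sq_sqrt (div_pos hkkr hm).le]; field_simp
  have hTeq : Real.pi * Real.sqrt (m / k) + Real.pi * Real.sqrt (m / (k + kr))
      = Real.pi / ω1 + Real.pi / ω2 := by
    rw [show m / k = (k / m)⁻¹ by rw [inv_div], show m / (k + kr) = ((k + kr) / m)⁻¹ by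
      rw [inv_div], Real.sqrt_inv, Real.sqrt_inv, ← div_eq_mul_inv, ← div_eq_mul_inv]
  rw [hTeq]
  obtain ⟨K, hF⟩ := osc_lip m k kr hm hk hkr
  obtain ⟨t₀, c, hc, hu0, hd0⟩ :=
    osc_zero m k kr ω1 ω2 hm hk hkr hω1 hω2 hm1 hm2 hF u hu hu' hode hne
  have hπ1 : 0 < Real.pi / ω1 := div_pos Real.pi_pos hω1
  have hπ2 : 0 < Real.pi / ω2 := div_pos Real.pi_pos hω2
  -- first arc: contact phase
  have hfield1 : ∀ t ∈ Icc t₀ (t₀ + Real.pi / ω2),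
      k * oscW ω2 0 c t₀ t + kr * max (oscW ω2 0 c t₀ t) 0
        = m * ω2 ^ 2 * oscW ω2 0 c t₀ t := by
    intro t ht
    have h1 : 0 ≤ ω2 * (t - t₀) := by have := ht.1; nlinarith
    have h2 : ω2 * (t - t₀) ≤ Real.pi := by
      have h3 : t - t₀ ≤ Real.pi / ω2 := by linarith [ht.2]
      calc ω2 * (t - t₀) ≤ ω2 * (Real.pi / ω2) := by nlinarith
        _ = Real.pi := mul_div_cancel₀ _ hω2.ne'
    have hsin : 0 ≤ Real.sin (ω2 * (t - t₀)) := Real.sin_nonneg_of_nonneg_of_le_pi h1 h2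
    have hw : 0 ≤ oscW ω2 0 c t₀ t := by
      unfold oscW
      have : 0 ≤ c / ω2 := (div_pos hc hω2).le
      nlinarith
    rw [max_eq_left hw, hm2]; ring
  have harc1 := osc_arc m k kr ω2 0 c t₀ (Real.pi / ω2) hm hω2 hπ2.le hF
    u hu hu' hode hu0 hd0 hfield1
  have hωπ2 : ω2 * (t₀ + Real.pi / ω2 - t₀) = Real.pi := by
    rw [add_sub_cancel_left, mul_div_cancel₀ _ hω2.ne']
  have hmemb : t₀ + Real.pi / ω2 ∈ Icc t₀ (t₀ + Real.pi / ω2) := ⟨by linarith, le_refl _⟩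
  have hub : u (t₀ + Real.pi / ω2) = 0 := by
    rw [(harc1 _ hmemb).1]; unfold oscW; rw [hωπ2]; simp
  have hdb : deriv u (t₀ + Real.pi / ω2) = -c := by
    rw [(harc1 _ hmemb).2]; unfold oscW'; rw [hωπ2]; simp
  -- second arc: free phase
  have hfield2 : ∀ t ∈ Icc (t₀ + Real.pi / ω2) (t₀ + Real.pi / ω2 + Real.pi / ω1),
      k * oscW ω1 0 (-c) (t₀ + Real.pi / ω2) t
        + kr * max (oscW ω1 0 (-c) (t₀ + Real.pi / ω2) t) 0
        = m * ω1 ^ 2 * oscW ω1 0 (-c) (t₀ + Real.pi / ω2) t := by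
    intro t ht
    have h1 : 0 ≤ ω1 * (t - (t₀ + Real.pi / ω2)) := by have := ht.1; nlinarith
    have h2 : ω1 * (t - (t₀ + Real.pi / ω2)) ≤ Real.pi := by
      have h3 : t - (t₀ + Real.pi / ω2) ≤ Real.pi / ω1 := by linarith [ht.2]
      calc ω1 * (t - (t₀ + Real.pi / ω2)) ≤ ω1 * (Real.pi / ω1) := by nlinarith
        _ = Real.pi := mul_div_cancel₀ _ hω1.ne'
    have hsin : 0 ≤ Real.sin (ω1 * (t - (t₀ + Real.pi / ω2))) :=
      Real.sin_nonneg_of_nonneg_of_le_pi h1 h2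
    have hw : oscW ω1 0 (-c) (t₀ + Real.pi / ω2) t ≤ 0 := by
      unfold oscW
      have : -c / ω1 ≤ 0 := div_nonpos_of_nonpos_of_nonneg (by linarith) hω1.le
      nlinarith
    rw [max_eq_right hw, hm1]; ring
  have harc2 := osc_arc m k kr ω1 0 (-c) (t₀ + Real.pi / ω2) (Real.pi / ω1) hm hω1 hπ1.le hF
    u hu hu' hode hub hdb hfield2
  have hωπ1 : ω1 * (t₀ + Real.pi / ω2 + Real.pi / ω1 - (t₀ + Real.pi / ω2)) = Real.pi := by
    rw [add_sub_cancel_left, mul_div_cancel₀ _ hω1.ne']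
  have hmemT : t₀ + Real.pi / ω2 + Real.pi / ω1
      ∈ Icc (t₀ + Real.pi / ω2) (t₀ + Real.pi / ω2 + Real.pi / ω1) := ⟨by linarith, le_refl _⟩
  have huT : u (t₀ + Real.pi / ω2 + Real.pi / ω1) = 0 := by
    rw [(harc2 _ hmemT).1]; unfold oscW; rw [hωπ1]; simp
  have hdT : deriv u (t₀ + Real.pi / ω2 + Real.pi / ω1) = c := by
    rw [(harc2 _ hmemT).2]; unfold oscW'; rw [hωπ1]; simp
  -- periodicity
  set T := Real.pi / ω1 + Real.pi / ω2 with hT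
  have hfd := osc_sol m k kr hm u hu hu' hode
  have hgd : ∀ t, HasDerivAt (fun s => (u (s + T), deriv u (s + T)))
      (oscF m k kr (u (t + T), deriv u (t + T))) t := fun t =>
    HasDerivAt.comp_add_const t T (hfd (t + T))
  have h0 : (u t₀, deriv u t₀) = (u (t₀ + T), deriv u (t₀ + T)) := by
    have ht0T : t₀ + T = t₀ + Real.pi / ω2 + Real.pi / ω1 := by rw [hT]; ring
    rw [hu0, hd0, ht0T, huT, hdT]
  have huniq := osc_uniq hF hfd hgd h0
  have hper : Function.Periodic u T := fun x => (congrArg Prod.fst (huniq x)).symm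
  refine ⟨hper, ?_⟩
  intro T' hT' hperT'
  by_contra hlt
  push_neg at hlt
  have hfun : (fun s => u (s + T')) = u := funext hperT'
  have hdper : deriv u (t₀ + T') = c := by
    have : deriv u (t₀ + T') = deriv (fun x => u (x + T')) t₀ := (deriv_comp_add_const u T' t₀).symm
    rw [this, hfun]; exact hd0
  have huper : u (t₀ + T') = 0 := by rw [hperT' t₀, hu0]
  rcases lt_trichotomy T' (Real.pi / ω2) with h | h | h
  · -- inside the contact arc: u would be positive
    have hmem : t₀ + T' ∈ Icc t₀ (t₀ + Real.pi / ω2) := ⟨by linarith, by linarith⟩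
    have hval := (harc1 _ hmem).1
    have harg : ω2 * (t₀ + T' - t₀) = ω2 * T' := by ring
    have hsin : 0 < Real.sin (ω2 * T') := by
      apply Real.sin_pos_of_pos_of_lt_pi
      · exact mul_pos hω2 hT'
      · calc ω2 * T' < ω2 * (Real.pi / ω2) := (mul_lt_mul_iff_right₀ hω2).mpr h
          _ = Real.pi := mul_div_cancel₀ _ hω2.ne'
    have : (0:ℝ) < u (t₀ + T') := by
      rw [hval]; unfold oscW; rw [harg]
      simp only [zero_mul, zero_add]
      exact mul_pos (div_pos hc hω2) hsin
    linarith [huper]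
  · -- exactly the contact half-period: derivative flips sign
    have : deriv u (t₀ + T') = -c := by rw [h]; exact hdb
    rw [hdper] at this
    linarith
  · -- inside the free arc: u would be negative
    have hmem : t₀ + T' ∈ Icc (t₀ + Real.pi / ω2) (t₀ + Real.pi / ω2 + Real.pi / ω1) :=
      ⟨by linarith, by rw [hT] at hlt; linarith⟩
    have hval := (harc2 _ hmem).1
    have harg : ω1 * (t₀ + T' - (t₀ + Real.pi / ω2)) = ω1 * (T' - Real.pi / ω2) := by ring
    have hsin : 0 < Real.sin (ω1 * (T' - Real.pi / ω2)) := by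
      apply Real.sin_pos_of_pos_of_lt_pi
      · exact mul_pos hω1 (by linarith)
      · have hlt' : T' - Real.pi / ω2 < Real.pi / ω1 := by rw [hT] at hlt; linarith
        calc ω1 * (T' - Real.pi / ω2) < ω1 * (Real.pi / ω1) := (mul_lt_mul_iff_right₀ hω1).mpr hlt'
          _ = Real.pi := mul_div_cancel₀ _ hω1.ne'
    have : u (t₀ + T') < 0 := by
      rw [hval]; unfold oscW; rw [harg]
      simp only [zero_mul, zero_add]
      exact mul_neg_of_neg_of_pos (div_neg_of_neg_of_pos (by linarith) hω1) hsin
    linarith [huper]
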